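/- Let s ≥ 2 be an integer, let N ∈ ℕ, and let a, b be digit sequences such that: a N ≥ 1 and a n = 0 for all n > N; b n = a n for all n < N, b N = a N − 1, and b n = s − 1 for all n > N (so that ∑_{n=0}^∞ a n / s^{n+1} = ∑_{n=0}^∞ b n / s^{n+1}, i.e. a and b are the two s-adic representations of the same s-adic rational number). Then the corresponding nega-s-adic values are different: ∑_{n=0}^∞ (−1)^{n+1} a n / s^{n+1} ≠ ∑_{n=0}^∞ (−1)^{n+1} b n / s^{n+1}. (Paper's Lemma 1 for the function f₊.) -/

import Mathlib

/-- Paper's Lemma 1 for the function `f₊`: the two s-adic representations of an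
s-adic rational number (the terminating one `a` and the one `b` with tail
`s − 1`) have different nega-s-adic values. -/
theorem stmt_1 (s : ℕ) (hs : 2 ≤ s) (N : ℕ) (a b : ℕ → ℕ)
    (ha : ∀ n, a n ≤ s - 1) (hb : ∀ n, b n ≤ s - 1)
    (haN : 1 ≤ a N) (haTail : ∀ n > N, a n = 0)
    (hbBefore : ∀ n < N, b n = a n) (hbN : b N = a N - 1)
    (hbTail : ∀ n > N, b n = s - 1) :
    (∑' n : ℕ, (-1 : ℝ) ^ (n + 1) * (a n : ℝ) / (s : ℝ) ^ (n + 1)) ≠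
      (∑' n : ℕ, (-1 : ℝ) ^ (n + 1) * (b n : ℝ) / (s : ℝ) ^ (n + 1)) := by
  have hs0 : (s : ℝ) ≠ 0 := by positivity
  have hs1 : (1 : ℝ) < s := by exact_mod_cast (by omega : 1 < s)
  set f : ℕ → ℝ := fun n => (-1 : ℝ) ^ (n + 1) * (a n : ℝ) / (s : ℝ) ^ (n + 1) with hf
  set g : ℕ → ℝ := fun n => (-1 : ℝ) ^ (n + 1) * (b n : ℝ) / (s : ℝ) ^ (n + 1) with hg
  -- summability
  have hsum_geom : Summable (fun n : ℕ => (s : ℝ) * (1 / s) ^ n) :=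
    (summable_geometric_of_lt_one (by positivity) (by
      rw [div_lt_one (by positivity)]; exact hs1)).mul_left _
  have bound : ∀ (c : ℕ → ℕ), (∀ n, c n ≤ s - 1) →
      Summable (fun n => (-1 : ℝ) ^ (n + 1) * (c n : ℝ) / (s : ℝ) ^ (n + 1)) := by
    intro c hc
    apply Summable.of_norm_bounded hsum_geom
    intro n
    have hcn : (c n : ℝ) ≤ s := by
      have := hc n
      have : c n ≤ s := le_trans this (Nat.sub_le _ _)
      exact_mod_cast this
    have hppos : (0:ℝ) < (s : ℝ) ^ (n + 1) := by positivity
    rw [norm_div, norm_mul, norm_pow, norm_pow, norm_neg, norm_one, one_pow, one_mul,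
      Real.norm_natCast, Real.norm_natCast]
    rw [div_le_iff₀ hppos]
    have hrhs : (s : ℝ) * (1 / ↑s) ^ n * ↑s ^ (n + 1) = (s:ℝ) * s := by
      rw [div_pow, one_pow, pow_succ]
      field_simp
    rw [hrhs]
    nlinarith [hcn, hs1]
  have hfs : Summable f := bound a ha
  have hgs : Summable g := bound b hb
  -- the difference
  intro hEq
  have hdiff : ∑' n, (f n - g n) = 0 := by
    rw [Summable.tsum_sub hfs hgs, hEq, sub_self]
  have hsub : Summable (fun n => f n - g n) := hfs.sub hgs
  -- compute the difference series
  have hterm : ∀ k : ℕ, f (k + (N + 1)) - g (k + (N + 1)) =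
      ((-1 : ℝ) ^ (N + 1) * ((s : ℝ) - 1) / (s : ℝ) ^ (N + 2)) * (-1 / (s:ℝ)) ^ k := by
    intro k
    have h1 : a (k + (N + 1)) = 0 := haTail _ (by omega)
    have h2 : b (k + (N + 1)) = s - 1 := hbTail _ (by omega)
    have h3 : ((s - 1 : ℕ) : ℝ) = (s : ℝ) - 1 := by
      rw [Nat.cast_sub (by omega)]; norm_num
    simp only [hf, hg, h1, h2, h3, Nat.cast_zero, mul_zero, zero_div, zero_sub]
    rw [div_pow]
    have e1 : (-1 : ℝ) ^ (k + (N + 1) + 1) = -((-1:ℝ)^(N+1) * (-1:ℝ)^k) := by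
      rw [show k + (N + 1) + 1 = (N+1) + k + 1 by ring, pow_succ, pow_add]; ring
    have e2 : (s : ℝ) ^ (k + (N + 1) + 1) = (s:ℝ)^(N+2) * (s:ℝ)^k := by
      rw [show k + (N + 1) + 1 = (N+2) + k by ring, pow_add]
    rw [e1, e2]
    have hpk : ((s:ℝ))^k ≠ 0 := by positivity
    field_simp
  have htail : ∑' k : ℕ, (f (k + (N + 1)) - g (k + (N + 1))) =
      ((-1 : ℝ) ^ (N + 1) * ((s : ℝ) - 1) / (s : ℝ) ^ (N + 2)) * (1 - (-1 / (s:ℝ)))⁻¹ := by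
    rw [tsum_congr hterm, tsum_mul_left, tsum_geometric_of_norm_lt_one (by
      rw [norm_div, norm_neg, norm_one, Real.norm_natCast, div_lt_one (by positivity)]
      exact hs1)]
  have hhead : ∑ i ∈ Finset.range (N + 1), (f i - g i) =
      (-1 : ℝ) ^ (N + 1) / (s : ℝ) ^ (N + 1) := by
    rw [Finset.sum_range_succ]
    have h0 : ∀ i ∈ Finset.range N, f i - g i = 0 := by
      intro i hi
      simp only [Finset.mem_range] at hi
      simp [hf, hg, hbBefore i hi]
    rw [Finset.sum_eq_zero h0, zero_add]
    have hbNr : (b N : ℝ) = (a N : ℝ) - 1 := by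
      rw [hbN, Nat.cast_sub haN]; norm_num
    simp only [hf, hg, hbNr]
    ring
  have hsplit := (Summable.sum_add_tsum_nat_add (N + 1) hsub).symm
  rw [hdiff, hhead, htail] at hsplit
  -- now derive contradiction: the explicit value is nonzero
  have hs1' : (s : ℝ) + 1 ≠ 0 := by positivity
  have hpow1 : ((s : ℝ)) ^ (N + 1) ≠ 0 := by positivity
  have hpow2 : ((s : ℝ)) ^ (N + 2) ≠ 0 := by positivity
  have hneg : ((-1 : ℝ)) ^ (N + 1) ≠ 0 := by
    apply pow_ne_zero; norm_num
  have hinv : (1 - (-1 / (s:ℝ)))⁻¹ = s / (s + 1) := by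
    field_simp
    ring
  rw [hinv] at hsplit
  have h2s : (0:ℝ) < 2 * s := by positivity
  have hexpand : (-1 : ℝ) ^ (N + 1) / (s : ℝ) ^ (N + 1) +
      (-1 : ℝ) ^ (N + 1) * ((s : ℝ) - 1) / (s : ℝ) ^ (N + 2) * ((s:ℝ) / (s + 1)) =
      (-1 : ℝ) ^ (N + 1) * (2 * s) / ((s : ℝ) ^ (N + 1) * (s + 1)) := by
    rw [pow_succ (s:ℝ) (N+1)] at *
    field_simp
    ring
  rw [hexpand] at hsplit
  have hd : ((s : ℝ) ^ (N + 1) * ((s:ℝ) + 1)) ≠ 0 := by positivity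
  have hnum : ((-1 : ℝ) ^ (N + 1)) * (2 * (s:ℝ)) ≠ 0 :=
    mul_ne_zero hneg (by positivity)
  apply hnum
  have h := hsplit.symm
  rwa [div_eq_zero_iff, or_iff_left hd] at h
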